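/- Let K be irreducible, aperiodic, substochastic on countable S with convergence norm ρ = 1/R. If Yaglom limits π_x exist for all x ∈ S and the Jacka–Roberts ratio ĥ(y) = lim_n K^n(y,S)/K^n(x₀,S) exists for all y, then the generalized strong ratio limit property holds: for all u,v,x,y ∈ S and all m ∈ ℤ, lim_n K^{n+m}(u,v)/K^n(x,y) = R^{-m} · (ĥ(u) π_u(v)) / (ĥ(x) π_x(y)). -/

import Mathlib

open Filter Topology

open scoped Classical in
/-- Matrix powers of a kernel `K` on a countable state space. -/
noncomputable def Kpow {S : Type*} (K : S → S → ℝ) : ℕ → S → S → ℝ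
  | 0 => fun x y => if x = y then 1 else 0
  | n + 1 => fun x y => ∑' z, Kpow K n x z * K z y

open scoped Classical in
lemma Kpow_zero' {S : Type*} (K : S → S → ℝ) (x y : S) :
    Kpow K 0 x y = if x = y then 1 else 0 := rfl

lemma Kpow_succ' {S : Type*} (K : S → S → ℝ) (n : ℕ) (x y : S) :
    Kpow K (n+1) x y = ∑' z, Kpow K n x z * K z y := rfl

/-- Powers of the kernel, summed over the second argument. -/
noncomputable def gsig {S : Type*} (K : S → S → ℝ) (n : ℕ) (x : S) : ℝ :=
  ∑' y, Kpow K n x y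

lemma gsig_def {S : Type*} (K : S → S → ℝ) (n : ℕ) (x : S) :
    gsig K n x = ∑' y, Kpow K n x y := rfl

lemma grl_rpow_tendsto_one {C : ℝ} (hC : 0 < C) :
    Tendsto (fun n : ℕ => C ^ ((n : ℝ)⁻¹)) atTop (𝓝 1) := by
  have h0 : Tendsto (fun n : ℕ => ((n : ℝ))⁻¹) atTop (𝓝 0) :=
    tendsto_inv_atTop_zero.comp tendsto_natCast_atTop_atTop
  have hc : ContinuousAt (fun p : ℝ × ℝ => p.1 ^ p.2) (C, 0) :=
    Real.continuousAt_rpow (C, 0) (Or.inl hC.ne')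
  have := hc.tendsto.comp (tendsto_const_nhds.prodMk_nhds h0)
  simpa [Function.comp_def, Real.rpow_zero] using this

lemma grl_rpow_pow {c : ℝ} (hc : 0 ≤ c) {n : ℕ} (hn : n ≠ 0) :
    (c ^ n) ^ ((n : ℝ)⁻¹) = c := by
  rw [← Real.rpow_natCast c n, ← Real.rpow_mul hc,
    mul_inv_cancel₀ (Nat.cast_ne_zero.mpr hn), Real.rpow_one]

lemma grl_le_mul_of_forall {a b ρ : ℝ}
    (h : ∀ c, ρ < c → a ≤ c * b) : a ≤ ρ * b := by
  have ht : Tendsto (fun k : ℕ => (ρ + 1 / ((k : ℝ) + 1)) * b) atTop (𝓝 (ρ * b)) := by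
    have h1 : Tendsto (fun k : ℕ => ρ + 1 / ((k : ℝ) + 1)) atTop (𝓝 ρ) := by
      simpa using tendsto_const_nhds.add (tendsto_one_div_add_atTop_nhds_zero_nat (𝕜 := ℝ))
    simpa using h1.mul_const b
  refine ge_of_tendsto ht (Eventually.of_forall fun k => ?_)
  refine h _ ?_
  have : (0:ℝ) < 1 / ((k : ℝ) + 1) := by positivity
  linarith

set_option maxHeartbeats 4000000 in
/-- The generalized strong ratio limit property: for all states `u,v,x,y` and
integers `m`, `K^{n+m}(u,v)/K^n(x,y) → R^{-m} ĥ(u)π_u(v)/(ĥ(x)π_x(y))`, where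
`R^{-m} = ρ^m`. -/
theorem generalized_strong_ratio_limit {S : Type*} [Countable S] (K : S → S → ℝ)
    (hnn : ∀ x y, 0 ≤ K x y)
    (hsub : ∀ x, ∑' y, K x y ≤ 1)
    (hirr : ∀ x y : S, ∃ n, 0 < Kpow K n x y)
    (haper : ∀ x : S, ∀ m : ℕ, (∀ n, 0 < n → 0 < Kpow K n x x → m ∣ n) → m = 1)
    (ρ : ℝ) (hρpos : 0 < ρ) (hρle : ρ ≤ 1)
    (hρ : ∀ x y : S,
      Tendsto (fun n : ℕ => (Kpow K n x y) ^ ((n : ℝ)⁻¹)) atTop (𝓝 ρ))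
    (π : S → S → ℝ) (hπnn : ∀ x y, 0 ≤ π x y) (hπ1 : ∀ x, ∑' y, π x y = 1)
    (hyag : ∀ x y : S,
      Tendsto (fun n : ℕ => Kpow K n x y / ∑' z, Kpow K n x z) atTop (𝓝 (π x y)))
    (x₀ : S) (hhat : S → ℝ) (hhat₀ : hhat x₀ = 1)
    (hJR : ∀ y : S,
      Tendsto (fun n : ℕ => (∑' z, Kpow K n y z) / (∑' z, Kpow K n x₀ z))
        atTop (𝓝 (hhat y))) :
    ∀ (u v x y : S) (m : ℤ),
      Tendsto (fun n : ℕ => Kpow K ((n : ℤ) + m).toNat u v / Kpow K n x y)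
        atTop (𝓝 (ρ ^ m * (hhat u * π u v) / (hhat x * π x y))) := by
  classical
  have hyagσ : ∀ x y : S, Tendsto (fun n : ℕ => Kpow K n x y / gsig K n x)
      atTop (𝓝 (π x y)) := hyag
  have hJRσ : ∀ y : S, Tendsto (fun n : ℕ => gsig K n y / gsig K n x₀)
      atTop (𝓝 (hhat y)) := hJR
  have hKnn : ∀ n (x y : S), 0 ≤ Kpow K n x y := by
    intro n
    induction n with
    | zero => intro x y; rw [Kpow_zero']; split <;> norm_num
    | succ n ih =>
      intro x y; rw [Kpow_succ']
      exact tsum_nonneg fun z => mul_nonneg (ih x z) (hnn z y)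
  have hσnn : ∀ n (x : S), 0 ≤ gsig K n x := fun n x => tsum_nonneg fun y => hKnn n x y
  have hπsum : ∀ x : S, Summable (π x) := by
    intro x; by_contra h
    have h1 := hπ1 x
    rw [tsum_eq_zero_of_not_summable h] at h1
    norm_num at h1
  have hepos : ∀ x y : S, ∀ᶠ n in atTop, 0 < Kpow K n x y := by
    intro x y
    have h2 : ∀ᶠ n in atTop, ρ / 2 < (Kpow K n x y) ^ ((n : ℝ)⁻¹) :=
      (hρ x y).eventually (eventually_gt_nhds (by linarith))
    filter_upwards [h2, eventually_ge_atTop 1] with n hn hn1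
    rcases lt_or_eq_of_le (hKnn n x y) with h | h
    · exact h
    · exfalso
      have hne : ((n:ℝ))⁻¹ ≠ 0 := inv_ne_zero (Nat.cast_ne_zero.mpr (by omega))
      rw [← h, Real.zero_rpow hne] at hn
      linarith
  have hσev : ∀ x : S, ∀ᶠ n in atTop, 0 < gsig K n x := by
    intro x
    by_contra hev
    rw [Filter.not_eventually] at hev
    have hfreq : ∃ᶠ n in atTop, gsig K n x = 0 :=
      hev.mono fun n hn => le_antisymm (not_lt.mp hn) (hσnn n x)
    obtain ⟨φ, hφmono, hφ⟩ := Filter.extraction_of_frequently_atTop hfreq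
    have hzero : ∀ y, π x y = 0 := by
      intro y
      have h1 : Tendsto (fun j => Kpow K (φ j) x y / gsig K (φ j) x) atTop (𝓝 (π x y)) :=
        (hyagσ x y).comp hφmono.tendsto_atTop
      have h2 : (fun j => Kpow K (φ j) x y / gsig K (φ j) x) = fun _ => (0:ℝ) := by
        funext j; rw [hφ j, div_zero]
      rw [h2] at h1
      exact tendsto_nhds_unique h1 tendsto_const_nhds
    have h1 := hπ1 x
    simp only [hzero, tsum_zero] at h1
    norm_num at h1
  have hσsum : ∀ {n : ℕ} {x : S}, 0 < gsig K n x → Summable (fun y => Kpow K n x y) := by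
    intro n x h
    by_contra hs
    rw [gsig_def, tsum_eq_zero_of_not_summable hs] at h
    norm_num at h
  have hfam : ∀ x y : S, ∀ᶠ n in atTop, Summable (fun w => Kpow K n x w * K w y) := by
    intro x y
    obtain ⟨N, hN⟩ := eventually_atTop.mp (hepos x y)
    refine eventually_atTop.mpr ⟨N, fun n hn => ?_⟩
    have h1 : 0 < Kpow K (n+1) x y := hN (n+1) (le_trans hn (Nat.le_succ n))
    rw [Kpow_succ'] at h1
    by_contra hs
    rw [tsum_eq_zero_of_not_summable hs] at h1
    norm_num at h1
  have hyexists : ∀ x : S, ∃ y, 0 < π x y := by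
    intro x
    by_contra h
    push_neg at h
    have hz : ∀ y, π x y = 0 := fun y => le_antisymm (h y) (hπnn x y)
    have h1 := hπ1 x
    simp only [hz, tsum_zero] at h1
    norm_num at h1
  have hevsucc : ∀ (P : ℕ → Prop), (∀ᶠ n in atTop, P n) → (∀ᶠ n in atTop, P (n+1)) := by
    intro P h
    obtain ⟨N, hN⟩ := eventually_atTop.mp h
    exact eventually_atTop.mpr ⟨N, fun n hn => hN (n+1) (le_trans hn (Nat.le_succ n))⟩
  have hσroot : ∀ x : S, Tendsto (fun n : ℕ => (gsig K n x) ^ ((n : ℝ)⁻¹)) atTop (𝓝 ρ) := by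
    intro x
    obtain ⟨y0, hy0⟩ := hyexists x
    have hupper : Tendsto (fun n : ℕ =>
        (2 / π x y0) ^ ((n:ℝ)⁻¹) * (Kpow K n x y0) ^ ((n:ℝ)⁻¹)) atTop (𝓝 ρ) := by
      have := (grl_rpow_tendsto_one (C := 2 / π x y0) (by positivity)).mul (hρ x y0)
      simpa using this
    refine tendsto_of_tendsto_of_tendsto_of_le_of_le' (hρ x y0) hupper ?_ ?_
    · filter_upwards [hσev x] with n hσ
      exact Real.rpow_le_rpow (hKnn n x y0)
        (Summable.le_tsum (hσsum hσ) y0 fun z _ => hKnn n x z) (by positivity)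
    · have hball : ∀ᶠ n in atTop, π x y0 / 2 < Kpow K n x y0 / gsig K n x :=
        (hyagσ x y0).eventually (eventually_gt_nhds (by linarith))
      filter_upwards [hσev x, hball] with n hσ hb
      have h3 : π x y0 / 2 * gsig K n x < Kpow K n x y0 := (lt_div_iff₀ hσ).mp hb
      have h2 : gsig K n x ≤ 2 / π x y0 * Kpow K n x y0 := by
        rw [div_mul_eq_mul_div, le_div_iff₀ hy0]
        nlinarith [h3]
      calc (gsig K n x) ^ ((n:ℝ)⁻¹)
          ≤ (2 / π x y0 * Kpow K n x y0) ^ ((n:ℝ)⁻¹) :=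
            Real.rpow_le_rpow (hσnn n x) h2 (by positivity)
        _ = (2 / π x y0) ^ ((n:ℝ)⁻¹) * (Kpow K n x y0) ^ ((n:ℝ)⁻¹) :=
            Real.mul_rpow (by positivity) (hKnn n x y0)
  have hfreqr : ∀ (x : S) (c : ℝ), ρ < c →
      ∃ᶠ n in atTop, gsig K (n+1) x ≤ c * gsig K n x := by
    intro x c hc
    have hcpos : 0 < c := lt_trans hρpos hc
    by_contra h
    rw [Filter.not_frequently] at h
    have h' : ∀ᶠ n in atTop, 0 < gsig K n x ∧ c * gsig K n x < gsig K (n+1) x := by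
      filter_upwards [hσev x, h] with n h1 h2
      exact ⟨h1, lt_of_not_ge h2⟩
    obtain ⟨N, hN⟩ := eventually_atTop.mp h'
    have key : ∀ j : ℕ, gsig K N x * c ^ j ≤ gsig K (N + j) x := by
      intro j
      induction j with
      | zero => simp
      | succ j ih =>
        have h2 := (hN (N+j) (Nat.le_add_right N j)).2
        have : gsig K N x * c ^ (j+1) ≤ c * gsig K (N+j) x := by
          calc gsig K N x * c ^ (j+1) = c * (gsig K N x * c ^ j) := by ring
            _ ≤ c * gsig K (N+j) x := by nlinarith [ih]
        calc gsig K N x * c ^ (j+1) ≤ c * gsig K (N+j) x := this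
          _ ≤ gsig K (N+j+1) x := le_of_lt h2
    have hDpos : 0 < gsig K N x := (hN N le_rfl).1
    have hlow : ∀ n, N ≤ n → gsig K N x / c ^ N * c ^ n ≤ gsig K n x := by
      intro n hn
      obtain ⟨j, rfl⟩ := Nat.exists_eq_add_of_le hn
      have hid : gsig K N x / c ^ N * c ^ (N + j) = gsig K N x * c ^ j := by
        rw [pow_add]
        field_simp
      rw [hid]; exact key j
    have htend : Tendsto (fun n : ℕ => (gsig K N x / c ^ N) ^ ((n:ℝ)⁻¹) * c)
        atTop (𝓝 c) := by
      simpa using (grl_rpow_tendsto_one (by positivity : (0:ℝ) < gsig K N x / c ^ N)).mul_const c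
    have hcle : c ≤ ρ := by
      refine le_of_tendsto_of_tendsto htend (hσroot x) ?_
      refine eventually_atTop.mpr ⟨max N 1, fun n hn => ?_⟩
      have hnN : N ≤ n := le_trans (le_max_left _ _) hn
      have hn1 : n ≠ 0 := by
        have := le_trans (le_max_right N 1) hn; omega
      have h1 : (gsig K N x / c ^ N * c ^ n) ^ ((n:ℝ)⁻¹) ≤ (gsig K n x) ^ ((n:ℝ)⁻¹) :=
        Real.rpow_le_rpow (by positivity) (hlow n hnN) (by positivity)
      calc (gsig K N x / c ^ N) ^ ((n:ℝ)⁻¹) * c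
          = (gsig K N x / c ^ N) ^ ((n:ℝ)⁻¹) * (c ^ n) ^ ((n:ℝ)⁻¹) := by
            rw [grl_rpow_pow hcpos.le hn1]
        _ = (gsig K N x / c ^ N * c ^ n) ^ ((n:ℝ)⁻¹) :=
            (Real.mul_rpow (by positivity) (by positivity)).symm
        _ ≤ (gsig K n x) ^ ((n:ℝ)⁻¹) := h1
    linarith
  have hkey : ∀ (x v y : S), π x v * K v y ≤ ρ * π x y := by
    intro x v y
    refine grl_le_mul_of_forall fun c hc => ?_
    have hev : ∀ᶠ n in atTop, (0 < gsig K n x ∧ 0 < gsig K (n+1) x) ∧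
        Summable (fun w => Kpow K n x w * K w y) :=
      ((hσev x).and (hevsucc _ (hσev x))).and (hfam x y)
    have hfe := (hfreqr x c hc).and_eventually hev
    obtain ⟨φ, hφmono, hφ⟩ := Filter.extraction_of_frequently_atTop hfe
    have hle : ∀ j, Kpow K (φ j) x v / gsig K (φ j) x * K v y ≤
        c * (Kpow K (φ j + 1) x y / gsig K (φ j + 1) x) := by
      intro j
      obtain ⟨hrc, ⟨hσ1, hσ2⟩, hsm⟩ := hφ j
      have hub : Kpow K (φ j) x v * K v y ≤ Kpow K (φ j + 1) x y := by
        rw [Kpow_succ']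
        exact Summable.le_tsum hsm v fun z _ => mul_nonneg (hKnn (φ j) x z) (hnn z y)
      have h1 : Kpow K (φ j) x v / gsig K (φ j) x * K v y ≤
          Kpow K (φ j + 1) x y / gsig K (φ j) x := by
        rw [div_mul_eq_mul_div]
        gcongr
      have hr : gsig K (φ j + 1) x / gsig K (φ j) x ≤ c := by
        rw [div_le_iff₀ hσ1]; linarith [hrc]
      have h2 : Kpow K (φ j + 1) x y / gsig K (φ j) x ≤
          c * (Kpow K (φ j + 1) x y / gsig K (φ j + 1) x) := by
        have hid : Kpow K (φ j + 1) x y / gsig K (φ j) x =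
            Kpow K (φ j + 1) x y / gsig K (φ j + 1) x * (gsig K (φ j + 1) x / gsig K (φ j) x) := by
          field_simp
        rw [hid, mul_comm c]
        exact mul_le_mul_of_nonneg_left hr (div_nonneg (hKnn _ x y) (hσnn _ x))
      exact le_trans h1 h2
    have hL : Tendsto (fun j => Kpow K (φ j) x v / gsig K (φ j) x * K v y)
        atTop (𝓝 (π x v * K v y)) :=
      ((hyagσ x v).comp hφmono.tendsto_atTop).mul_const _
    have hR : Tendsto (fun j => c * (Kpow K (φ j + 1) x y / gsig K (φ j + 1) x))
        atTop (𝓝 (c * π x y)) := by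
      have hshift : Tendsto (fun j => φ j + 1) atTop atTop :=
        (tendsto_add_atTop_nat 1).comp hφmono.tendsto_atTop
      exact ((hyagσ x y).comp hshift).const_mul c
    exact le_of_tendsto_of_tendsto' hL hR hle
  have hpipos : ∀ x y : S, 0 < π x y := by
    intro x
    obtain ⟨y0, hy0⟩ := hyexists x
    have hstep : ∀ v y : S, 0 < π x v → 0 < K v y → 0 < π x y := by
      intro v y hv hk
      have h := hkey x v y
      by_contra hy
      push_neg at hy
      have h0 : π x y = 0 := le_antisymm hy (hπnn x y)
      rw [h0, mul_zero] at h
      nlinarith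
    have hmain : ∀ n (v y : S), 0 < π x v → 0 < Kpow K n v y → 0 < π x y := by
      intro n
      induction n with
      | zero =>
        intro v y hv h
        rw [Kpow_zero'] at h
        split_ifs at h with hh
        · rwa [← hh]
        · norm_num at h
      | succ n ih =>
        intro v y hv h
        rw [Kpow_succ'] at h
        have hex : ∃ w, 0 < Kpow K n v w * K w y := by
          by_contra hall
          push_neg at hall
          have hz : ∀ w, Kpow K n v w * K w y = 0 :=
            fun w => le_antisymm (hall w) (mul_nonneg (hKnn n v w) (hnn w y))
          simp only [hz, tsum_zero] at h
          norm_num at h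
        obtain ⟨w, hw⟩ := hex
        rcases mul_pos_iff.mp hw with ⟨h1, h2⟩ | ⟨h1, h2⟩
        · exact hstep w y (ih v w hv h1) h2
        · exact absurd h1 (not_lt.mpr (hKnn n v w))
    intro y
    obtain ⟨n, hn⟩ := hirr y0 y
    exact hmain n y0 y hy0 hn
  have hrowsum : ∀ v : S, Summable (K v) := by
    intro v
    have hv := hpipos x₀ v
    refine summable_of_sum_le (c := ρ / π x₀ v) (fun y => hnn v y) (fun F => ?_)
    have h2 : π x₀ v * ∑ y ∈ F, K v y ≤ ρ * ∑ y ∈ F, π x₀ y := by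
      rw [Finset.mul_sum, Finset.mul_sum]
      exact Finset.sum_le_sum fun y _ => hkey x₀ v y
    have h3 : ∑ y ∈ F, π x₀ y ≤ 1 := by
      rw [← hπ1 x₀]; exact Summable.sum_le_tsum F (fun y _ => hπnn x₀ y) (hπsum x₀)
    rw [le_div_iff₀ hv]
    nlinarith [h2, h3, hρpos.le]
  have hKle1 : ∀ (v y : S), K v y ≤ 1 :=
    fun v y => le_trans (Summable.le_tsum (hrowsum v) y fun z _ => hnn v z) (hsub v)
  have hpartial : ∀ (n : ℕ) (x : S), Summable (fun y => Kpow K n x y) →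
      ∀ F : Finset S, ∑ y ∈ F, Kpow K (n+1) x y ≤ gsig K n x := by
    intro n x hsm F
    have hin : ∀ y : S, Summable (fun w => Kpow K n x w * K w y) := by
      intro y
      exact Summable.of_nonneg_of_le (fun w => mul_nonneg (hKnn n x w) (hnn w y))
        (fun w => mul_le_of_le_one_right (hKnn n x w) (hKle1 w y)) hsm
    have h1 : ∑ y ∈ F, Kpow K (n+1) x y = ∑' w, ∑ y ∈ F, Kpow K n x w * K w y := by
      simp only [Kpow_succ']
      exact (Summable.tsum_finsetSum (fun y _ => hin y)).symm
    rw [h1]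
    have h2 : ∀ w, ∑ y ∈ F, Kpow K n x w * K w y ≤ Kpow K n x w := by
      intro w
      rw [← Finset.mul_sum]
      have hb : ∑ y ∈ F, K w y ≤ 1 :=
        le_trans (Summable.sum_le_tsum F (fun y _ => hnn w y) (hrowsum w)) (hsub w)
      exact mul_le_of_le_one_right (hKnn n x w) hb
    refine Summable.tsum_le_tsum h2 ?_ hsm
    exact Summable.of_nonneg_of_le
      (fun w => Finset.sum_nonneg fun y _ => mul_nonneg (hKnn n x w) (hnn w y)) h2 hsm
  have hKswl : ∀ (n : ℕ) (x : S), Summable (fun y => Kpow K n x y) ∧ gsig K n x ≤ 1 := by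
    intro n
    induction n with
    | zero =>
      intro x
      have hsm : Summable (fun y => Kpow K 0 x y) := by
        refine summable_of_ne_finset_zero (s := {x}) (fun y hy => ?_)
        rw [Kpow_zero', if_neg]
        intro he
        exact hy (by simp [he])
      refine ⟨hsm, ?_⟩
      rw [gsig_def, tsum_eq_single x (fun y hy => by
        rw [Kpow_zero', if_neg (fun he => hy he.symm)])]
      rw [Kpow_zero', if_pos rfl]
    | succ n ih =>
      intro x
      have hsm := (ih x).1
      have hb := hpartial n x hsm
      have hsm1 : Summable (fun y => Kpow K (n+1) x y) :=
        summable_of_sum_le (c := gsig K n x) (fun y => hKnn (n+1) x y) hb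
      exact ⟨hsm1, le_trans (Summable.tsum_le_of_sum_le hsm1 hb) (ih x).2⟩
  have hKsum : ∀ (n : ℕ) (x : S), Summable (fun y => Kpow K n x y) := fun n x => (hKswl n x).1
  have hσle1 : ∀ (n : ℕ) (x : S), gsig K n x ≤ 1 := fun n x => (hKswl n x).2
  have hσmono : ∀ (n : ℕ) (x : S), gsig K (n+1) x ≤ gsig K n x := fun n x =>
    Summable.tsum_le_of_sum_le (hKsum (n+1) x) (hpartial n x (hKsum n x))
  have hσanti : ∀ (x : S), Antitone (fun n => gsig K n x) := fun x =>
    antitone_nat_of_succ_le (fun n => hσmono n x)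
  have hσpos : ∀ (n : ℕ) (x : S), 0 < gsig K n x := by
    intro n x
    obtain ⟨N, hN⟩ := eventually_atTop.mp (hσev x)
    have h1 := hN (max n N) (le_max_right n N)
    exact lt_of_lt_of_le h1 (hσanti x (le_max_left n N))
  have hKple1 : ∀ (n : ℕ) (x y : S), Kpow K n x y ≤ 1 :=
    fun n x y => le_trans (Summable.le_tsum (hKsum n x) y fun z _ => hKnn n x z) (hσle1 n x)
  have hscheffe : ∀ (x : S) (g : S → ℝ), (∀ v, 0 ≤ g v) → (∀ v, g v ≤ 1) →
      Tendsto (fun n => ∑' v, Kpow K n x v / gsig K n x * g v) atTop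
        (𝓝 (∑' v, π x v * g v)) := by
    intro x g hg0 hg1
    set f : ℕ → S → ℝ := fun n v => Kpow K n x v / gsig K n x with hfdef
    have hfnn : ∀ n v, 0 ≤ f n v := fun n v => div_nonneg (hKnn n x v) (hσnn n x)
    have hfsm : ∀ n, Summable (f n) := fun n => (hKsum n x).div_const _
    have hf1 : ∀ n, ∑' v, f n v = 1 := by
      intro n
      have he : ∀ v, f n v = Kpow K n x v * (gsig K n x)⁻¹ := fun v => div_eq_mul_inv _ _
      rw [tsum_congr he, tsum_mul_right, ← gsig_def, mul_inv_cancel₀ (hσpos n x).ne']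
    have hconv : ∀ v, Tendsto (fun n => f n v) atTop (𝓝 (π x v)) := fun v => hyagσ x v
    have hmaxconv : Tendsto (fun n => ∑' v, max (π x v - f n v) 0) atTop (𝓝 0) := by
      have hdct := tendsto_tsum_of_dominated_convergence (𝓕 := atTop)
          (f := fun n v => max (π x v - f n v) 0) (g := fun _ => (0:ℝ)) (bound := π x)
          (hπsum x) (fun v => by
            have h2 := ((tendsto_const_nhds (x := π x v)).sub (hconv v)).max
              (tendsto_const_nhds (x := (0:ℝ)))
            simpa using h2)
          (Eventually.of_forall fun n => fun v => by
            rw [Real.norm_eq_abs, abs_of_nonneg (le_max_right _ _)]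
            exact max_le (by linarith [hfnn n v]) (hπnn x v))
      simpa using hdct
    have hsubsm : ∀ n, Summable (fun v => f n v - π x v) := fun n => (hfsm n).sub (hπsum x)
    have hmaxsm : ∀ n, Summable (fun v => max (π x v - f n v) 0) := fun n =>
      Summable.of_nonneg_of_le (fun v => le_max_right _ _)
        (fun v => max_le (by linarith [hfnn n v]) (hπnn x v)) (hπsum x)
    have hfgsm : ∀ n, Summable (fun v => f n v * g v) := fun n =>
      Summable.of_nonneg_of_le (fun v => mul_nonneg (hfnn n v) (hg0 v))
        (fun v => mul_le_of_le_one_right (hfnn n v) (hg1 v)) (hfsm n)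
    have hπgsm : Summable (fun v => π x v * g v) :=
      Summable.of_nonneg_of_le (fun v => mul_nonneg (hπnn x v) (hg0 v))
        (fun v => mul_le_of_le_one_right (hπnn x v) (hg1 v)) (hπsum x)
    have hbound : ∀ n, |∑' v, f n v * g v - ∑' v, π x v * g v| ≤
        2 * ∑' v, max (π x v - f n v) 0 := by
      intro n
      have h1 : ∑' v, f n v * g v - ∑' v, π x v * g v = ∑' v, (f n v - π x v) * g v := by
        rw [← Summable.tsum_sub (hfgsm n) hπgsm]
        exact tsum_congr fun v => by ring
      have habs : Summable (fun v => |(f n v - π x v) * g v|) := by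
        refine Summable.of_nonneg_of_le (fun v => abs_nonneg _) (fun v => ?_) (hsubsm n).abs
        rw [abs_mul]
        exact mul_le_of_le_one_right (abs_nonneg _)
          (by rw [abs_of_nonneg (hg0 v)]; exact hg1 v)
      have h2 : |∑' v, (f n v - π x v) * g v| ≤ ∑' v, |(f n v - π x v) * g v| := by
        have hh := norm_tsum_le_tsum_norm (f := fun v => (f n v - π x v) * g v)
          (by simpa only [Real.norm_eq_abs] using habs)
        simpa only [Real.norm_eq_abs] using hh
      have h3 : ∑' v, |(f n v - π x v) * g v| ≤ ∑' v, |f n v - π x v| :=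
        Summable.tsum_le_tsum (fun v => by
          rw [abs_mul]
          exact mul_le_of_le_one_right (abs_nonneg _)
            (by rw [abs_of_nonneg (hg0 v)]; exact hg1 v)) habs (hsubsm n).abs
      have h4 : ∑' v, |f n v - π x v| = 2 * ∑' v, max (π x v - f n v) 0 := by
        have hptw : ∀ v, |f n v - π x v| = (f n v - π x v) + 2 * max (π x v - f n v) 0 := by
          intro v
          rcases le_total (π x v) (f n v) with h | h
          · rw [abs_of_nonneg (by linarith), max_eq_right (by linarith)]; ring
          · rw [abs_of_nonpos (by linarith), max_eq_left (by linarith)]; ring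
        rw [tsum_congr hptw, Summable.tsum_add (hsubsm n) ((hmaxsm n).mul_left 2)]
        rw [Summable.tsum_sub (hfsm n) (hπsum x), hf1 n, hπ1 x, tsum_mul_left]
        ring
      calc |∑' v, f n v * g v - ∑' v, π x v * g v|
          = |∑' v, (f n v - π x v) * g v| := by rw [h1]
        _ ≤ ∑' v, |(f n v - π x v) * g v| := h2
        _ ≤ ∑' v, |f n v - π x v| := h3
        _ = 2 * ∑' v, max (π x v - f n v) 0 := h4
    have hdiff : Tendsto (fun n => ∑' v, f n v * g v - ∑' v, π x v * g v) atTop (𝓝 0) := by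
      refine squeeze_zero_norm (a := fun n => 2 * ∑' v, max (π x v - f n v) 0) (fun n => ?_) ?_
      · rw [Real.norm_eq_abs]; exact hbound n
      · simpa using hmaxconv.const_mul 2
    rwa [tendsto_sub_nhds_zero_iff] at hdiff
  have hAfun : ∀ (x : S) (n : ℕ) (y : S),
      ∑' v, Kpow K n x v / gsig K n x * K v y = Kpow K (n+1) x y / gsig K n x := by
    intro x n y
    have he : ∀ v, Kpow K n x v / gsig K n x * K v y
        = Kpow K n x v * K v y * (gsig K n x)⁻¹ := fun v => by ring
    rw [tsum_congr he, tsum_mul_right, ← div_eq_mul_inv, Kpow_succ']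
  have hrt : ∀ x : S, Tendsto (fun n => gsig K (n+1) x / gsig K n x) atTop (𝓝 ρ) := by
    intro x
    set q : ℝ := ∑' v, π x v * K v x with hq
    have hA0 : Tendsto (fun n => Kpow K (n+1) x x / gsig K n x) atTop (𝓝 q) :=
      Tendsto.congr (fun n => hAfun x n x)
        (hscheffe x (fun v => K v x) (fun v => hnn v x) (fun v => hKle1 v x))
    set lam : ℝ := q / π x x with hlam
    have hfy : Tendsto (fun n => Kpow K (n+1) x x / gsig K (n+1) x) atTop (𝓝 (π x x)) :=
      (hyagσ x x).comp (tendsto_add_atTop_nat 1)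
    have hrlam : Tendsto (fun n => gsig K (n+1) x / gsig K n x) atTop (𝓝 lam) := by
      have h3 := hA0.div hfy (hpipos x x).ne'
      refine h3.congr' ?_
      filter_upwards [hevsucc _ (hepos x x)] with n hK
      have hσ1 := (hσpos n x).ne'
      have hσ2 := (hσpos (n+1) x).ne'
      simp only [Pi.div_apply]
      field_simp
    have hlamnn : 0 ≤ lam := by
      refine ge_of_tendsto hrlam (Eventually.of_forall fun n => ?_)
      exact div_nonneg (hσnn _ x) (hσnn n x)
    have hlamle : lam ≤ ρ := by
      have hall : ∀ c, ρ < c → lam ≤ c := by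
        intro c hc
        obtain ⟨φ, hφmono, hφ⟩ := Filter.extraction_of_frequently_atTop (hfreqr x c hc)
        have h1 : Tendsto (fun j => gsig K (φ j + 1) x / gsig K (φ j) x) atTop (𝓝 lam) :=
          hrlam.comp hφmono.tendsto_atTop
        refine le_of_tendsto h1 (Eventually.of_forall fun j => ?_)
        rw [div_le_iff₀ (hσpos (φ j) x)]
        linarith [hφ j]
      have h := grl_le_mul_of_forall (b := 1) (ρ := ρ) (fun c hc => by simpa using hall c hc)
      simpa using h
    have hinv : ∀ y, ∑' v, π x v * K v y = lam * π x y := by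
      intro y
      have h1 : Tendsto (fun n => Kpow K (n+1) x y / gsig K n x) atTop
          (𝓝 (∑' v, π x v * K v y)) :=
        Tendsto.congr (fun n => hAfun x n y)
          (hscheffe x (fun v => K v y) (fun v => hnn v y) (fun v => hKle1 v y))
      have h2 : Tendsto (fun n =>
          gsig K (n+1) x / gsig K n x * (Kpow K (n+1) x y / gsig K (n+1) x))
          atTop (𝓝 (lam * π x y)) :=
        hrlam.mul ((hyagσ x y).comp (tendsto_add_atTop_nat 1))
      have h3 : ∀ n, gsig K (n+1) x / gsig K n x * (Kpow K (n+1) x y / gsig K (n+1) x)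
          = Kpow K (n+1) x y / gsig K n x := by
        intro n
        field_simp [(hσpos n x).ne', (hσpos (n+1) x).ne']
      exact tendsto_nhds_unique h1 (Tendsto.congr h3 h2)
    have hiter : ∀ (n : ℕ) (v y : S), π x v * Kpow K n v y ≤ lam ^ n * π x y := by
      intro n
      induction n with
      | zero =>
        intro v y
        rw [Kpow_zero']
        split_ifs with h
        · subst h; simp
        · simpa using hπnn x y
      | succ n ih =>
        intro v y
        rw [Kpow_succ', ← tsum_mul_left]
        have hs2 : Summable (fun w => lam ^ n * π x w * K w y) := by
          refine Summable.of_nonneg_of_le (fun w => ?_) (fun w => ?_)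
            ((hπsum x).mul_left (lam ^ n))
          · exact mul_nonneg (mul_nonneg (pow_nonneg hlamnn n) (hπnn x w)) (hnn w y)
          · exact mul_le_of_le_one_right
              (mul_nonneg (pow_nonneg hlamnn n) (hπnn x w)) (hKle1 w y)
        have hs1 : Summable (fun w => π x v * (Kpow K n v w * K w y)) := by
          refine Summable.of_nonneg_of_le (fun w => ?_) (fun w => ?_) hs2
          · exact mul_nonneg (hπnn x v) (mul_nonneg (hKnn n v w) (hnn w y))
          · calc π x v * (Kpow K n v w * K w y) = π x v * Kpow K n v w * K w y := by ring
              _ ≤ lam ^ n * π x w * K w y := mul_le_mul_of_nonneg_right (ih v w) (hnn w y)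
        calc ∑' w, π x v * (Kpow K n v w * K w y)
            ≤ ∑' w, lam ^ n * π x w * K w y := by
              refine Summable.tsum_le_tsum (fun w => ?_) hs1 hs2
              calc π x v * (Kpow K n v w * K w y) = π x v * Kpow K n v w * K w y := by ring
                _ ≤ lam ^ n * π x w * K w y := mul_le_mul_of_nonneg_right (ih v w) (hnn w y)
          _ = lam ^ n * ∑' w, π x w * K w y := by
              rw [← tsum_mul_left]; exact tsum_congr fun w => by ring
          _ = lam ^ n * (lam * π x y) := by rw [hinv y]
          _ = lam ^ (n+1) * π x y := by ring
    have hlamge : ρ ≤ lam := by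
      have hKn : ∀ n, Kpow K n x x ≤ lam ^ n := by
        intro n
        by_contra hcon
        push_neg at hcon
        have hmul := mul_lt_mul_of_pos_left hcon (hpipos x x)
        nlinarith [hiter n x x]
      refine le_of_tendsto (hρ x x) ?_
      filter_upwards [eventually_ge_atTop 1] with n hn1
      have h1 : (Kpow K n x x) ^ ((n:ℝ)⁻¹) ≤ (lam ^ n) ^ ((n:ℝ)⁻¹) :=
        Real.rpow_le_rpow (hKnn n x x) (hKn n) (by positivity)
      rwa [grl_rpow_pow hlamnn (by omega : n ≠ 0)] at h1
    have hle : lam = ρ := le_antisymm hlamle hlamge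
    rwa [hle] at hrlam
  have hchap : ∀ (a b : ℕ) (x y : S),
      Kpow K (a + b) x y = ∑' z, Kpow K a x z * Kpow K b z y := by
    intro a b
    induction b with
    | zero =>
      intro x y
      rw [Nat.add_zero]
      symm
      rw [tsum_eq_single y (fun z hz => by rw [Kpow_zero', if_neg hz, mul_zero])]
      rw [Kpow_zero', if_pos rfl, mul_one]
    | succ b ih =>
      intro x y
      have hl : ∀ w, Kpow K (a+b) x w * K w y
          = ∑' z, Kpow K a x z * (Kpow K b z w * K w y) := by
        intro w
        rw [ih x w, ← tsum_mul_right]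
        exact tsum_congr fun z => by ring
      have hr : ∀ z, Kpow K a x z * Kpow K (b+1) z y
          = ∑' w, Kpow K a x z * (Kpow K b z w * K w y) := by
        intro z
        rw [Kpow_succ', ← tsum_mul_left]
      have hgoal : Kpow K (a + (b+1)) x y
          = ∑' w, ∑' z, Kpow K a x z * (Kpow K b z w * K w y) := by
        rw [show a + (b+1) = (a+b)+1 from rfl, Kpow_succ']
        exact tsum_congr hl
      rw [hgoal, tsum_congr hr]
      refine Summable.tsum_comm' (f := fun z w => Kpow K a x z * (Kpow K b z w * K w y)) ?_ ?_ ?_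
      · refine (summable_prod_of_nonneg ?_).mpr ⟨?_, ?_⟩
        · intro p
          exact mul_nonneg (hKnn a x p.1) (mul_nonneg (hKnn b p.1 p.2) (hnn p.2 y))
        · intro z
          show Summable fun w => Kpow K a x z * (Kpow K b z w * K w y)
          exact (Summable.of_nonneg_of_le
            (fun w => mul_nonneg (hKnn b z w) (hnn w y))
            (fun w => mul_le_of_le_one_right (hKnn b z w) (hKle1 w y))
            (hKsum b z)).mul_left _
        · show Summable fun z => ∑' w, Kpow K a x z * (Kpow K b z w * K w y)
          refine Summable.congr (f := fun z => Kpow K a x z * Kpow K (b+1) z y) ?_ hr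
          exact Summable.of_nonneg_of_le
            (fun z => mul_nonneg (hKnn a x z) (hKnn (b+1) z y))
            (fun z => mul_le_of_le_one_right (hKnn a x z) (hKple1 (b+1) z y))
            (hKsum a x)
      · intro z
        exact (Summable.of_nonneg_of_le
          (fun w => mul_nonneg (hKnn b z w) (hnn w y))
          (fun w => mul_le_of_le_one_right (hKnn b z w) (hKle1 w y))
          (hKsum b z)).mul_left _
      · intro w
        refine Summable.of_nonneg_of_le
          (fun z => mul_nonneg (hKnn a x z) (mul_nonneg (hKnn b z w) (hnn w y)))
          (fun z => ?_) (hKsum a x)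
        refine mul_le_of_le_one_right (hKnn a x z) ?_
        calc Kpow K b z w * K w y ≤ 1 * 1 :=
              mul_le_mul (hKple1 b z w) (hKle1 w y) (hnn w y) zero_le_one
          _ = 1 := by norm_num
  have hlower : ∀ (k n : ℕ) (x : S), Kpow K k x x₀ * gsig K n x₀ ≤ gsig K (n + k) x := by
    intro k n x
    have hpt : ∀ y, Kpow K k x x₀ * Kpow K n x₀ y ≤ Kpow K (k + n) x y := by
      intro y
      rw [hchap k n x y]
      refine Summable.le_tsum ?_ x₀ fun z _ => mul_nonneg (hKnn k x z) (hKnn n z y)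
      exact Summable.of_nonneg_of_le (fun z => mul_nonneg (hKnn k x z) (hKnn n z y))
        (fun z => mul_le_of_le_one_right (hKnn k x z) (hKple1 n z y)) (hKsum k x)
    calc Kpow K k x x₀ * gsig K n x₀ = ∑' y, Kpow K k x x₀ * Kpow K n x₀ y := by
          rw [gsig_def, tsum_mul_left]
      _ ≤ ∑' y, Kpow K (k + n) x y :=
          Summable.tsum_le_tsum hpt ((hKsum n x₀).mul_left _) (hKsum (k+n) x)
      _ = gsig K (n + k) x := by rw [gsig_def, Nat.add_comm]
  have hhatpos : ∀ x : S, 0 < hhat x := by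
    intro x
    obtain ⟨kk, hkk⟩ := (hepos x x₀).exists
    have hseq : ∀ n, Kpow K kk x x₀ ≤ gsig K (n + kk) x / gsig K (n + kk) x₀ := by
      intro n
      rw [le_div_iff₀ (hσpos (n+kk) x₀)]
      calc Kpow K kk x x₀ * gsig K (n+kk) x₀ ≤ Kpow K kk x x₀ * gsig K n x₀ :=
            mul_le_mul_of_nonneg_left (hσanti x₀ (Nat.le_add_right n kk)) (hKnn kk x x₀)
        _ ≤ gsig K (n + kk) x := hlower kk n x
    have ht : Tendsto (fun n => gsig K (n + kk) x / gsig K (n + kk) x₀) atTop (𝓝 (hhat x)) :=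
      (hJRσ x).comp (tendsto_add_atTop_nat kk)
    exact lt_of_lt_of_le hkk (ge_of_tendsto' ht hseq)
  have hratk : ∀ k : ℕ, Tendsto (fun n => gsig K (n + k) x₀ / gsig K n x₀)
      atTop (𝓝 (ρ ^ k)) := by
    intro k
    induction k with
    | zero =>
      simp only [Nat.add_zero, pow_zero]
      exact tendsto_const_nhds.congr (fun n => (div_self (hσpos n x₀).ne').symm)
    | succ k ih =>
      have h1 : Tendsto (fun n => gsig K ((n + k) + 1) x₀ / gsig K (n + k) x₀)
          atTop (𝓝 ρ) := (hrt x₀).comp (tendsto_add_atTop_nat k)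
      have h2 := h1.mul ih
      have h3 : ∀ n, gsig K ((n+k)+1) x₀ / gsig K (n+k) x₀ * (gsig K (n+k) x₀ / gsig K n x₀)
          = gsig K (n + (k+1)) x₀ / gsig K n x₀ := by
        intro n
        have e : n + (k+1) = (n+k)+1 := by omega
        rw [e, div_mul_div_comm, mul_comm (gsig K ((n+k)+1) x₀) (gsig K (n+k) x₀),
          mul_div_mul_left _ _ (hσpos (n+k) x₀).ne']
      have hv : ρ * ρ ^ k = ρ ^ (k+1) := by ring
      rw [hv] at h2
      exact Tendsto.congr h3 h2
  have hmain : ∀ (u v x y : S) (k : ℕ),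
      Tendsto (fun n : ℕ => Kpow K (n + k) u v / Kpow K n x y) atTop
        (𝓝 (ρ ^ k * (hhat u * π u v) / (hhat x * π x y))) := by
    intro u v x y k
    have ha : Tendsto (fun n => Kpow K (n+k) u v / gsig K (n+k) u) atTop (𝓝 (π u v)) :=
      (hyagσ u v).comp (tendsto_add_atTop_nat k)
    have hb : Tendsto (fun n => gsig K (n+k) u / gsig K (n+k) x₀) atTop (𝓝 (hhat u)) :=
      (hJRσ u).comp (tendsto_add_atTop_nat k)
    have hc := hratk k
    have hd : Tendsto (fun n => gsig K n x₀ / gsig K n x) atTop (𝓝 (hhat x)⁻¹) := by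
      have h := (hJRσ x).inv₀ (hhatpos x).ne'
      refine h.congr fun n => ?_
      rw [inv_div]
    have he : Tendsto (fun n => gsig K n x / Kpow K n x y) atTop (𝓝 (π x y)⁻¹) := by
      have h := (hyagσ x y).inv₀ (hpipos x y).ne'
      refine h.congr fun n => ?_
      rw [inv_div]
    have hprod := (((ha.mul hb).mul hc).mul hd).mul he
    have hval : π u v * hhat u * ρ ^ k * (hhat x)⁻¹ * (π x y)⁻¹
        = ρ ^ k * (hhat u * π u v) / (hhat x * π x y) := by
      field_simp
      try ring
    rw [hval] at hprod
    refine hprod.congr' ?_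
    filter_upwards [hepos x y] with n hK
    have h1 := (hσpos (n+k) u).ne'
    have h2 := (hσpos (n+k) x₀).ne'
    have h3 := (hσpos n x₀).ne'
    have h4 := (hσpos n x).ne'
    field_simp
    try ring
  intro u v x y m
  rcases le_or_gt 0 m with hm | hm
  · have hk : ((m.toNat : ℤ)) = m := Int.toNat_of_nonneg hm
    have heq : ∀ n : ℕ, ((n : ℤ) + m).toNat = n + m.toNat := by intro n; omega
    have h := hmain u v x y m.toNat
    have hval : ρ ^ m = ρ ^ m.toNat := by
      conv_lhs => rw [← hk]
      exact zpow_natCast ρ m.toNat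
    rw [hval]
    refine h.congr fun n => ?_
    rw [heq n]
  · set k := (-m).toNat with hkdef
    have hk : (k : ℤ) = -m := Int.toNat_of_nonneg (by omega)
    have h := hmain x y u v k
    have hMpos : 0 < ρ ^ k * (hhat x * π x y) / (hhat u * π u v) :=
      div_pos (mul_pos (pow_pos hρpos k) (mul_pos (hhatpos x) (hpipos x y)))
        (mul_pos (hhatpos u) (hpipos u v))
    have hinv := h.inv₀ hMpos.ne'
    have hcomp := hinv.comp (tendsto_sub_atTop_nat k)
    have hval : (ρ ^ k * (hhat x * π x y) / (hhat u * π u v))⁻¹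
        = ρ ^ m * (hhat u * π u v) / (hhat x * π x y) := by
      have hm' : ρ ^ m = (ρ ^ k : ℝ)⁻¹ := by
        have hmk : m = -(k:ℤ) := by omega
        rw [hmk, zpow_neg, zpow_natCast]
      rw [hm']
      field_simp
    rw [hval] at hcomp
    refine hcomp.congr' ?_
    filter_upwards [eventually_ge_atTop k] with n hn
    have e1 : n - k + k = n := by omega
    have e2 : ((n : ℤ) + m).toNat = n - k := by omega
    simp only [Function.comp_apply]
    rw [e1, inv_div, e2]
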